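/- Let r ≥ 9 be an integer. Suppose that every finite simple graph H satisfying the semi-planar edge bounds with maximum degree at most r and with |V(H)| divisible by r admits an equitable r-coloring. Then every finite simple graph G satisfying the semi-planar edge bounds with maximum degree at most r admits an equitable r-coloring. (This is Lemma 2.2 of the paper for the semi-planar case.) -/

import Mathlib

open scoped Classical

namespace Equitable

variable {V : Type*}

/-- An equitable `r`-coloring of `G`: a proper coloring with `r` colors whose
color classes pairwise differ in size by at most `1`. -/
def IsEquitableColoring [Fintype V] (G : SimpleGraph V) (r : ℕ) (c : V → Fin r) : Prop :=
  (∀ u v : V, G.Adj u v → c u ≠ c v) ∧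
  ∀ i j : Fin r,
    (Finset.univ.filter fun v => c v = i).card ≤
      (Finset.univ.filter fun v => c v = j).card + 1

/-- The number of edges of `G` with both endpoints in `S`. -/
noncomputable def edgesWithin [Fintype V] (G : SimpleGraph V) (S : Finset V) : ℕ :=
  (G.edgeFinset.filter fun e => ∀ v ∈ e, v ∈ S).card

/-- The number of edges of `G` with one endpoint in `X` and the other in `Y`. -/
noncomputable def edgesBetween [Fintype V] (G : SimpleGraph V) (X Y : Finset V) : ℕ :=
  (G.edgeFinset.filter fun e => ∃ u ∈ X, ∃ w ∈ Y, e = s(u, w)).card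

/-- The semi-planar edge bounds. -/
def SemiPlanarBounds [Fintype V] (G : SimpleGraph V) : Prop :=
  (∀ S : Finset V, edgesWithin G S ≤ 3 * S.card) ∧
  ∀ X Y : Finset V, Disjoint X Y → edgesBetween G X Y ≤ 2 * (X.card + Y.card)

/-- The planar edge bounds. -/
def PlanarBounds [Fintype V] (G : SimpleGraph V) : Prop :=
  (∀ S : Finset V, 3 ≤ S.card → edgesWithin G S ≤ 3 * S.card - 6) ∧
  ∀ X Y : Finset V, Disjoint X Y → 3 ≤ X.card + Y.card →
    edgesBetween G X Y ≤ 2 * (X.card + Y.card) - 4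

/-- The semi-planar bipartite edge bound. -/
def SemiPlanarBipBound [Fintype V] (G : SimpleGraph V) : Prop :=
  ∀ X Y : Finset V, Disjoint X Y → edgesBetween G X Y ≤ 2 * (X.card + Y.card)

/-- The planar bipartite edge bound. -/
def PlanarBipBound [Fintype V] (G : SimpleGraph V) : Prop :=
  ∀ X Y : Finset V, Disjoint X Y → 3 ≤ X.card + Y.card →
    edgesBetween G X Y ≤ 2 * (X.card + Y.card) - 4

/-- `P` is an almost equitable coloring of `G − x`: a partition of `V(G) \ {x}` into `r`
independent sets, the small class `P 0` of size `s − 1` and the other classes of size `s`. -/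
def AEColoring [Fintype V] (G : SimpleGraph V) (x : V) {r : ℕ} [NeZero r] (s : ℕ)
    (P : Fin r → Finset V) : Prop :=
  (∀ i j : Fin r, i ≠ j → Disjoint (P i) (P j)) ∧
  (∀ v : V, (∃ i, v ∈ P i) ↔ v ≠ x) ∧
  (∀ i : Fin r, ∀ u ∈ P i, ∀ w ∈ P i, ¬ G.Adj u w) ∧
  (P 0).card = s - 1 ∧
  ∀ i : Fin r, i ≠ 0 → (P i).card = s

/-- The arc relation of the auxiliary digraph `H`: an arc from class `i` to class `j`
iff `i ≠ j` and some vertex of `P i` has no `G`-neighbor in `P j` (such a vertex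
is a witness of the arc and is called movable to `P j`). -/
def Arc (G : SimpleGraph V) {r : ℕ} (P : Fin r → Finset V) (i j : Fin r) : Prop :=
  i ≠ j ∧ ∃ v ∈ P i, ∀ u ∈ P j, ¬ G.Adj v u

/-- A class is accessible if the auxiliary digraph has a directed path (possibly of
length `0`) from it to the small class `P 0`. -/
def Accessible (G : SimpleGraph V) {r : ℕ} [NeZero r] (P : Fin r → Finset V)
    (i : Fin r) : Prop :=
  Relation.ReflTransGen (Arc G P) i 0

/-- The number of accessible classes. -/
noncomputable def accCount (G : SimpleGraph V) {r : ℕ} [NeZero r]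
    (P : Fin r → Finset V) : ℕ :=
  (Finset.univ.filter fun i => Accessible G P i).card

/-- No almost equitable coloring of `G − x` has more accessible classes than `P`. -/
def MaxAccessible [Fintype V] (G : SimpleGraph V) (x : V) {r : ℕ} [NeZero r] (s : ℕ)
    (P : Fin r → Finset V) : Prop :=
  ∀ P' : Fin r → Finset V, AEColoring G x s P' → accCount G P' ≤ accCount G P

/-- Class `i` blocks class `j` if `i ≠ j` and the auxiliary digraph minus the
class `i` has no directed path from `j` to the small class `P 0`. -/
def Blocks (G : SimpleGraph V) {r : ℕ} [NeZero r] (P : Fin r → Finset V)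
    (i j : Fin r) : Prop :=
  i ≠ j ∧ ¬ Relation.ReflTransGen (fun p q => Arc G P p q ∧ p ≠ i ∧ q ≠ i) j 0

/-- An accessible class is terminal if it blocks no accessible class. -/
def Terminal (G : SimpleGraph V) {r : ℕ} [NeZero r] (P : Fin r → Finset V)
    (i : Fin r) : Prop :=
  Accessible G P i ∧ ∀ j : Fin r, Accessible G P j → ¬ Blocks G P i j

/-- `u` is a solo neighbor of `v` (where `v` lies in the accessible class `P i`):
`u` lies in a non-accessible class, is adjacent to `v`, and `v` is the unique
neighbor of `u` in `P i`.  `Q(v)` is the set of such `u`. -/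
def SoloNbr (G : SimpleGraph V) {r : ℕ} [NeZero r] (P : Fin r → Finset V)
    (i : Fin r) (v u : V) : Prop :=
  (∃ k : Fin r, ¬ Accessible G P k ∧ u ∈ P k) ∧ G.Adj v u ∧
    ∀ w ∈ P i, G.Adj u w → w = v

/-- `u ∈ Q'(v)`: `u` is a solo neighbor of `v` that is non-adjacent to some other
solo neighbor of `v`. -/
def InQ' (G : SimpleGraph V) {r : ℕ} [NeZero r] (P : Fin r → Finset V)
    (i : Fin r) (v u : V) : Prop :=
  SoloNbr G P i v u ∧ ∃ u' : V, SoloNbr G P i v u' ∧ u' ≠ u ∧ ¬ G.Adj u u'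

/-- A vertex `v` of a terminal accessible class `P i` is ordinary if some other vertex of
`P i` is movable to another accessible class, or there are at most two accessible classes. -/
def Ordinary (G : SimpleGraph V) {r : ℕ} [NeZero r] (P : Fin r → Finset V)
    (i : Fin r) (v : V) : Prop :=
  (∃ v' ∈ P i, v' ≠ v ∧
    ∃ j : Fin r, j ≠ i ∧ Accessible G P j ∧ ∀ w ∈ P j, ¬ G.Adj v' w) ∨
  accCount G P ≤ 2

/-- The strong component of the auxiliary digraph containing class `i`. -/
noncomputable def strongComp (G : SimpleGraph V) {r : ℕ} (P : Fin r → Finset V)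
    (i : Fin r) : Finset (Fin r) :=
  Finset.univ.filter fun j =>
    Relation.ReflTransGen (Arc G P) i j ∧ Relation.ReflTransGen (Arc G P) j i



section Aux
open Finset




lemma fiber_sum [Fintype V] {r : ℕ} (c : V → Fin r) :
    ∑ i : Fin r, (Finset.univ.filter fun v => c v = i).card = Fintype.card V := by
  rw [← Finset.card_univ]
  exact (Finset.card_eq_sum_card_fiberwise (fun x _ => Finset.mem_univ (c x))).symm

lemma equitable_dvd_fibers [Fintype V] {r : ℕ} (hr : r ≠ 0) (c : V → Fin r)
    (heq : ∀ i j : Fin r,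
      (Finset.univ.filter fun v => c v = i).card ≤
        (Finset.univ.filter fun v => c v = j).card + 1)
    (hdvd : r ∣ Fintype.card V) :
    ∀ i : Fin r, (Finset.univ.filter fun v => c v = i).card = Fintype.card V / r := by
  set f : Fin r → ℕ := fun i => (Finset.univ.filter fun v => c v = i).card with hf
  obtain ⟨k, hk⟩ := hdvd
  have hr1 : 1 ≤ r := Nat.pos_of_ne_zero hr
  have hne : (Finset.univ : Finset (Fin r)).Nonempty := by
    simpa [Finset.univ_nonempty_iff] using Fin.pos_iff_nonempty.mp hr1
  obtain ⟨i0, -, hmin⟩ := Finset.exists_min_image Finset.univ f hne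
  have hsum : ∑ i : Fin r, f i = r * k := by rw [hf]; rw [fiber_sum c, hk]
  have hminle : ∀ i, f i0 ≤ f i := fun i => hmin i (Finset.mem_univ i)
  have hcard : (Finset.univ : Finset (Fin r)).card = r := by simp
  set a := f i0 with ha
  have hall : ∀ i, f i = a := by
    by_contra hno
    push_neg at hno
    obtain ⟨i1, hi1⟩ := hno
    have h1 : a + 1 ≤ f i1 := by have := hminle i1; omega
    have hlow : r * a + 1 ≤ ∑ i : Fin r, f i := by
      have h2 : ∑ i ∈ Finset.univ.erase i1, a ≤ ∑ i ∈ Finset.univ.erase i1, f i :=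
        Finset.sum_le_sum (fun i _ => hminle i)
      have h3 : ∑ i ∈ Finset.univ.erase i1, f i + f i1 = ∑ i : Fin r, f i :=
        Finset.sum_erase_add _ _ (Finset.mem_univ i1)
      have h4 : ∑ i ∈ Finset.univ.erase i1, a = (r - 1) * a := by
        rw [Finset.sum_const, Finset.card_erase_of_mem (Finset.mem_univ i1), hcard, smul_eq_mul]
      have h5 : (r - 1) * a + a = r * a := by
        rw [Nat.sub_one_mul]
        have : a ≤ r * a := Nat.le_mul_of_pos_left a hr1
        omega
      omega
    have hup : ∑ i : Fin r, f i ≤ r * a + (r - 1) := by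
      have h2 : ∑ i ∈ Finset.univ.erase i0, f i ≤ ∑ i ∈ Finset.univ.erase i0, (a + 1) :=
        Finset.sum_le_sum (fun i _ => by have h := heq i i0; simpa [hf, ← ha] using h)
      have h3 : ∑ i ∈ Finset.univ.erase i0, f i + f i0 = ∑ i : Fin r, f i :=
        Finset.sum_erase_add _ _ (Finset.mem_univ i0)
      have h4 : ∑ i ∈ Finset.univ.erase i0, (a + 1) = (r - 1) * (a + 1) := by
        rw [Finset.sum_const, Finset.card_erase_of_mem (Finset.mem_univ i0), hcard, smul_eq_mul]
      have h5 : (r - 1) * (a + 1) + (a + 1) = r * (a + 1) := by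
        rw [Nat.sub_one_mul]
        have : a + 1 ≤ r * (a + 1) := Nat.le_mul_of_pos_left _ hr1
        omega
      have h6 : r * (a + 1) = r * a + r := by ring
      omega
    rw [hsum] at hlow hup
    have hk1 : a < k := by
      have : r * a < r * k := by omega
      exact Nat.lt_of_mul_lt_mul_left this
    have hk2 : k < a + 1 := by
      have : r * k < r * (a + 1) := by have : r * (a+1) = r * a + r := by ring
                                       omega
      exact Nat.lt_of_mul_lt_mul_left this
    omega
  intro i
  have h7 : r * a = r * k := by
    rw [← hsum, Finset.sum_congr rfl (fun i _ => hall i), Finset.sum_const, hcard, smul_eq_mul]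
  have h8 : a = k := Nat.eq_of_mul_eq_mul_left hr1 h7
  show f i = _
  rw [hall i, h8, hk, Nat.mul_div_cancel_left _ hr1]





/-- number of big classes -/
lemma count_big {r : ℕ} (f : Fin r → ℕ) (m t : ℕ) (ht : t < r)
    (hsum : ∑ i : Fin r, f i = r * m + t)
    (hdi : ∀ i, f i = m ∨ f i = m + 1) :
    (Finset.univ.filter fun i => f i = m + 1).card = t := by
  classical
  set B := (Finset.univ.filter fun i => f i = m + 1).card with hB
  have hsplit : ∑ i ∈ Finset.univ.filter (fun i => f i = m + 1), f i
      + ∑ i ∈ Finset.univ.filter (fun i => ¬ f i = m + 1), f i = ∑ i : Fin r, f i :=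
    Finset.sum_filter_add_sum_filter_not _ _ _
  have h1 : ∑ i ∈ Finset.univ.filter (fun i => f i = m + 1), f i = B * (m + 1) := by
    rw [Finset.sum_congr rfl (fun i hi => (Finset.mem_filter.mp hi).2), Finset.sum_const,
      smul_eq_mul]
  have hcards : B + (Finset.univ.filter fun i => ¬ f i = m + 1).card = r := by
    rw [hB, Finset.card_filter_add_card_filter_not]; simp
  have h2 : ∑ i ∈ Finset.univ.filter (fun i => ¬ f i = m + 1), f i
      = (r - B) * m := by
    rw [Finset.sum_congr rfl (fun i hi => ?_), Finset.sum_const, smul_eq_mul]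
    · congr 1; omega
    · have := Finset.mem_filter.mp hi
      rcases hdi i with h | h
      · exact h
      · exact absurd h this.2
  have hBr : B ≤ r := by omega
  have key : B * (m + 1) + (r - B) * m = r * m + B := by
    have : (r - B) * m = r * m - B * m := by rw [Nat.sub_mul]
    have hle : B * m ≤ r * m := Nat.mul_le_mul_right _ hBr
    have : B * (m+1) = B * m + B := by ring
    omega
  omega

/-- min degree at most 6 -/
lemma exists_low_degree [Fintype V] (G : SimpleGraph V)
    (hG : ∀ S : Finset V, edgesWithin G S ≤ 3 * S.card) (hne : Nonempty V) :
    ∃ v : V, G.degree v ≤ 6 := by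
  by_contra hno
  push_neg at hno
  have hsum : ∑ v : V, G.degree v = 2 * G.edgeFinset.card :=
    SimpleGraph.sum_degrees_eq_twice_card_edges G
  have hE : G.edgeFinset.card = edgesWithin G Finset.univ := by
    unfold edgesWithin
    rw [Finset.filter_true_of_mem (fun e _ => by intro v _; exact Finset.mem_univ v)]
  have h1 : edgesWithin G Finset.univ ≤ 3 * Fintype.card V := by
    simpa using hG Finset.univ
  have h2 : 7 * Fintype.card V ≤ ∑ v : V, G.degree v := by
    calc 7 * Fintype.card V = ∑ _v : V, 7 := by
          rw [Finset.sum_const, smul_eq_mul, Finset.card_univ, mul_comm]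
      _ ≤ _ := Finset.sum_le_sum (fun v _ => hno v)
  have h3 : 1 ≤ Fintype.card V := Fintype.card_pos_iff.mpr hne
  omega



variable {V' : Type*}


lemma comap_edgesWithin_le [Fintype V] [Fintype V'] (G : SimpleGraph V) (f : V' → V)
    (hf : Function.Injective f) (S : Finset V') :
    edgesWithin (G.comap f) S ≤ edgesWithin G (S.image f) := by
  unfold edgesWithin
  apply Finset.card_le_card_of_injOn (Sym2.map f)
  · intro e he
    induction e using Sym2.ind with
    | _ a b =>
      simp only [Finset.mem_coe, Finset.mem_filter, SimpleGraph.mem_edgeFinset, SimpleGraph.mem_edgeSet,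
        SimpleGraph.comap_adj] at he ⊢
      obtain ⟨hadj, hmem⟩ := he
      rw [Sym2.map_pair_eq]
      refine ⟨hadj, ?_⟩
      intro v hv
      rw [Sym2.mem_iff] at hv
      rcases hv with rfl | rfl
      · exact Finset.mem_image_of_mem f (hmem a (Sym2.mem_mk_left a b))
      · exact Finset.mem_image_of_mem f (hmem b (Sym2.mem_mk_right a b))
  · exact (Sym2.map.injective hf).injOn

lemma comap_edgesBetween_le [Fintype V] [Fintype V'] (G : SimpleGraph V) (f : V' → V)
    (hf : Function.Injective f) (X Y : Finset V') :
    edgesBetween (G.comap f) X Y ≤ edgesBetween G (X.image f) (Y.image f) := by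
  unfold edgesBetween
  apply Finset.card_le_card_of_injOn (Sym2.map f)
  · intro e he
    simp only [Finset.mem_coe, Finset.mem_filter, SimpleGraph.mem_edgeFinset, SimpleGraph.mem_edgeSet] at he ⊢
    obtain ⟨hadj, u, hu, w, hw, rfl⟩ := he
    constructor
    · rw [Sym2.map_pair_eq]
      simpa using hadj
    · exact ⟨f u, Finset.mem_image_of_mem f hu, f w, Finset.mem_image_of_mem f hw,
        Sym2.map_pair_eq f u w⟩
  · exact (Sym2.map.injective hf).injOn

lemma comap_degree_le [Fintype V] [Fintype V'] (G : SimpleGraph V) (f : V' → V)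
    (hf : Function.Injective f) (a : V') :
    (G.comap f).degree a ≤ G.degree (f a) := by
  rw [← SimpleGraph.card_neighborFinset_eq_degree, ← SimpleGraph.card_neighborFinset_eq_degree]
  apply Finset.card_le_card_of_injOn f
  · intro u hu
    simp only [Finset.mem_coe, SimpleGraph.mem_neighborFinset] at hu ⊢
    exact hu
  · exact hf.injOn




lemma sym2_bound {α : Type*} [DecidableEq α] (E : Finset (Sym2 α)) (t : Finset α)
    (hnd : ∀ e ∈ E, ¬ e.IsDiag) (hend : ∀ e ∈ E, ∀ x ∈ e, x ∈ t) :
    E.card + t.card ≤ Nat.choose (t.card + 1) 2 := by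
  have hsub : E ∪ t.image Sym2.diag ⊆ t.sym2 := by
    intro e he
    rw [Finset.mem_union] at he
    rw [Finset.mem_sym2_iff]
    rcases he with he | he
    · exact hend e he
    · obtain ⟨a, ha, rfl⟩ := Finset.mem_image.mp he
      intro x hx
      have : Sym2.diag a = s(a, a) := rfl
      rw [this, Sym2.mem_iff] at hx
      rcases hx with rfl | rfl <;> exact ha
  have hdisj : Disjoint E (t.image Sym2.diag) := by
    rw [Finset.disjoint_left]
    intro e he he'
    obtain ⟨a, _, rfl⟩ := Finset.mem_image.mp he'
    exact hnd _ he (Sym2.diag_isDiag a)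
  calc E.card + t.card = E.card + (t.image Sym2.diag).card := by
        rw [Finset.card_image_of_injective _ Sym2.diag_injective]
    _ = (E ∪ t.image Sym2.diag).card := (Finset.card_union_of_disjoint hdisj).symm
    _ ≤ t.sym2.card := Finset.card_le_card hsub
    _ = _ := Finset.card_sym2 t

def cliqueSum (G : SimpleGraph V) (d : ℕ) : SimpleGraph (V ⊕ Fin d) where
  Adj a b := match a, b with
    | .inl u, .inl v => G.Adj u v
    | .inr i, .inr j => i ≠ j
    | _, _ => False
  symm := by
    constructor
    rintro (u | i) (v | j) h
    · exact G.adj_symm h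
    · exact h.elim
    · exact h.elim
    · exact Ne.symm h
  loopless := by
    constructor
    rintro (u | i) h
    · exact G.irrefl h
    · exact h rfl

@[simp] lemma cliqueSum_adj_inl_inl (G : SimpleGraph V) (d : ℕ) (u v : V) :
    (cliqueSum G d).Adj (Sum.inl u) (Sum.inl v) ↔ G.Adj u v := Iff.rfl

@[simp] lemma cliqueSum_adj_inr_inr (G : SimpleGraph V) (d : ℕ) (i j : Fin d) :
    (cliqueSum G d).Adj (Sum.inr i) (Sum.inr j) ↔ i ≠ j := Iff.rfl

@[simp] lemma cliqueSum_adj_inl_inr (G : SimpleGraph V) (d : ℕ) (u : V) (j : Fin d) :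
    ¬ (cliqueSum G d).Adj (Sum.inl u) (Sum.inr j) := fun h => h

@[simp] lemma cliqueSum_adj_inr_inl (G : SimpleGraph V) (d : ℕ) (i : Fin d) (v : V) :
    ¬ (cliqueSum G d).Adj (Sum.inr i) (Sum.inl v) := fun h => h

lemma split_card [Fintype V] {d : ℕ} (S : Finset (V ⊕ Fin d)) :
    (Finset.univ.filter fun v : V => Sum.inl v ∈ S).card
      + (Finset.univ.filter fun i : Fin d => Sum.inr i ∈ S).card = S.card := by
  classical
  have : S = ((Finset.univ.filter fun v : V => Sum.inl v ∈ S).image Sum.inl)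
      ∪ ((Finset.univ.filter fun i : Fin d => Sum.inr i ∈ S).image Sum.inr) := by
    ext x
    cases x with
    | inl v => simp
    | inr i => simp
  conv_rhs => rw [this]
  rw [Finset.card_union_of_disjoint, Finset.card_image_of_injective _ Sum.inl_injective,
    Finset.card_image_of_injective _ Sum.inr_injective]
  · rw [Finset.disjoint_left]
    rintro x hx hy
    obtain ⟨v, -, rfl⟩ := Finset.mem_image.mp hx
    obtain ⟨i, -, h⟩ := Finset.mem_image.mp hy
    exact Sum.inl_ne_inr h.symm

variable {V₂ : Type*}

lemma cliqueSum_inl_part_within [Fintype V] (G : SimpleGraph V) {d : ℕ} (v₀ : V)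
    (S : Finset (V ⊕ Fin d)) :
    (((cliqueSum G d).edgeFinset.filter fun e => ∀ v ∈ e, v ∈ S).filter
        (fun e => ∃ u v : V, e = s(Sum.inl u, Sum.inl v))).card
      ≤ edgesWithin G (Finset.univ.filter fun v : V => Sum.inl v ∈ S) := by
  classical
  unfold edgesWithin
  apply Finset.card_le_card_of_injOn (Sym2.map (Sum.elim id fun _ => v₀))
  · intro e he
    simp only [Finset.mem_coe, Finset.mem_filter, SimpleGraph.mem_edgeFinset, SimpleGraph.mem_edgeSet] at he
    obtain ⟨⟨heE, heS⟩, u, v, rfl⟩ := he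
    rw [Sym2.map_pair_eq]
    simp only [Finset.mem_coe, Sum.elim_inl, id_eq, Finset.mem_filter, SimpleGraph.mem_edgeFinset,
      SimpleGraph.mem_edgeSet]
    refine ⟨heE, ?_⟩
    intro x hx
    rw [Sym2.mem_iff] at hx
    rcases hx with rfl | rfl
    · exact ⟨Finset.mem_univ _, heS _ (Sym2.mem_mk_left _ _)⟩
    · exact ⟨Finset.mem_univ _, heS _ (Sym2.mem_mk_right _ _)⟩
  · intro e he e' he' h
    simp only [Finset.coe_filter, Set.mem_setOf_eq, Finset.mem_filter] at he he'
    obtain ⟨-, u, v, rfl⟩ := he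
    obtain ⟨-, u', v', rfl⟩ := he'
    have h2 := congrArg (Sym2.map (Sum.inl : V → V ⊕ Fin d)) h
    simpa [Sym2.map_pair_eq] using h2

set_option maxHeartbeats 2000000 in
lemma cliqueSum_edgesWithin [Fintype V] (G : SimpleGraph V) {d : ℕ} (hd : d ≤ 5) (v₀ : V)
    (hG : ∀ S : Finset V, edgesWithin G S ≤ 3 * S.card) (S : Finset (V ⊕ Fin d)) :
    edgesWithin (cliqueSum G d) S ≤ 3 * S.card := by
  classical
  set S₁ := Finset.univ.filter fun v : V => Sum.inl v ∈ S with hS₁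
  set S₂ := Finset.univ.filter fun i : Fin d => Sum.inr i ∈ S with hS₂
  set F := (cliqueSum G d).edgeFinset.filter fun e => ∀ v ∈ e, v ∈ S with hF
  set P := fun e : Sym2 (V ⊕ Fin d) => ∃ u v : V, e = s(Sum.inl u, Sum.inl v) with hP
  have hsplitF : (F.filter P).card + (F.filter fun e => ¬ P e).card = F.card :=
    Finset.card_filter_add_card_filter_not _
  have hA : (F.filter P).card ≤ edgesWithin G S₁ := cliqueSum_inl_part_within G v₀ S
  have hBprep : ∀ e ∈ F.filter (fun e => ¬ P e), ¬ e.IsDiag ∧ ∀ x ∈ e, x ∈ S₂.image Sum.inr := by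
    intro e he
    induction e using Sym2.ind with
    | _ a b =>
      simp only [hF, hP, Finset.mem_filter, SimpleGraph.mem_edgeFinset,
        SimpleGraph.mem_edgeSet] at he
      obtain ⟨⟨heE, heS⟩, hnP⟩ := he
      refine ⟨SimpleGraph.not_isDiag_of_mem_edgeSet _ (((cliqueSum G d).mem_edgeSet).mpr heE), ?_⟩
      rcases a with u | i
      · rcases b with v | j
        · exact absurd ⟨u, v, rfl⟩ hnP
        · exact absurd heE (cliqueSum_adj_inl_inr G d u j)
      · rcases b with v | j
        · exact absurd heE (cliqueSum_adj_inr_inl G d i v)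
        · intro x hx
          rw [Sym2.mem_iff] at hx
          rcases hx with rfl | rfl
          · exact Finset.mem_image_of_mem _ (Finset.mem_filter.mpr
              ⟨Finset.mem_univ _, heS _ (Sym2.mem_mk_left _ _)⟩)
          · exact Finset.mem_image_of_mem _ (Finset.mem_filter.mpr
              ⟨Finset.mem_univ _, heS _ (Sym2.mem_mk_right _ _)⟩)
  have hB : (F.filter fun e => ¬ P e).card + S₂.card ≤ Nat.choose (S₂.card + 1) 2 := by
    have := sym2_bound (F.filter fun e => ¬ P e) (S₂.image Sum.inr)
      (fun e he => (hBprep e he).1) (fun e he => (hBprep e he).2)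
    rwa [Finset.card_image_of_injective _ Sum.inr_injective] at this
  have hS : S₁.card + S₂.card = S.card := split_card S
  have h2 : S₂.card ≤ 5 := by
    have : S₂.card ≤ d := by simpa using Finset.card_le_univ S₂
    omega
  have hA3 : edgesWithin G S₁ ≤ 3 * S₁.card := hG S₁
  have hch : Nat.choose (S₂.card + 1) 2 ≤ 4 * S₂.card := by
    rw [Nat.choose_two_right]
    have h3 : (S₂.card + 1) * (S₂.card + 1 - 1) ≤ 8 * S₂.card := by
      have : S₂.card + 1 - 1 = S₂.card := by omega
      rw [this]
      exact Nat.mul_le_mul_right _ (by omega)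
    calc (S₂.card + 1) * (S₂.card + 1 - 1) / 2 ≤ 8 * S₂.card / 2 := Nat.div_le_div_right h3
      _ = 4 * S₂.card := by omega
  have hBB : (F.filter fun e => ¬ P e).card ≤ 3 * S₂.card := by omega
  calc edgesWithin (cliqueSum G d) S = F.card := by
        rw [hF]; unfold edgesWithin; congr 1; apply Finset.filter_congr_decidable
    _ = (F.filter P).card + (F.filter fun e => ¬ P e).card := hsplitF.symm
    _ ≤ 3 * S₁.card + 3 * S₂.card := Nat.add_le_add (hA.trans hA3) hBB
    _ = 3 * S.card := by rw [← hS]; ring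


lemma cliqueSum_inl_part_between [Fintype V] (G : SimpleGraph V) {d : ℕ} (v₀ : V)
    (X Y : Finset (V ⊕ Fin d)) :
    (((cliqueSum G d).edgeFinset.filter fun e => ∃ u ∈ X, ∃ w ∈ Y, e = s(u, w)).filter
        (fun e => ∃ u v : V, e = s(Sum.inl u, Sum.inl v))).card
      ≤ edgesBetween G (Finset.univ.filter fun v : V => Sum.inl v ∈ X)
          (Finset.univ.filter fun v : V => Sum.inl v ∈ Y) := by
  classical
  unfold edgesBetween
  apply Finset.card_le_card_of_injOn (Sym2.map (Sum.elim id fun _ => v₀))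
  · intro e he
    simp only [Finset.mem_coe, Finset.mem_filter, SimpleGraph.mem_edgeFinset, SimpleGraph.mem_edgeSet] at he
    obtain ⟨⟨heE, u, hu, w, hw, heq⟩, a, b, rfl⟩ := he
    rw [Sym2.eq_iff] at heq
    rw [Sym2.map_pair_eq]
    simp only [Finset.mem_coe, Sum.elim_inl, id_eq, Finset.mem_filter, SimpleGraph.mem_edgeFinset,
      SimpleGraph.mem_edgeSet]
    refine ⟨heE, ?_⟩
    rcases heq with ⟨rfl, rfl⟩ | ⟨rfl, rfl⟩
    · exact ⟨a, ⟨Finset.mem_univ _, hu⟩, b, ⟨Finset.mem_univ _, hw⟩, rfl⟩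
    · exact ⟨b, ⟨Finset.mem_univ _, hu⟩, a, ⟨Finset.mem_univ _, hw⟩, Sym2.eq_swap⟩
  · intro e he e' he' h
    simp only [Finset.coe_filter, Set.mem_setOf_eq, Finset.mem_filter] at he he'
    obtain ⟨-, u, v, rfl⟩ := he
    obtain ⟨-, u', v', rfl⟩ := he'
    have h2 := congrArg (Sym2.map (Sum.inl : V → V ⊕ Fin d)) h
    simpa [Sym2.map_pair_eq] using h2

set_option maxHeartbeats 2000000 in
lemma cliqueSum_edgesBetween [Fintype V] (G : SimpleGraph V) {d : ℕ} (hd : d ≤ 5) (v₀ : V)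
    (hG : ∀ X Y : Finset V, Disjoint X Y → edgesBetween G X Y ≤ 2 * (X.card + Y.card))
    (X Y : Finset (V ⊕ Fin d)) (hXY : Disjoint X Y) :
    edgesBetween (cliqueSum G d) X Y ≤ 2 * (X.card + Y.card) := by
  classical
  set X₁ := Finset.univ.filter fun v : V => Sum.inl v ∈ X with hX₁
  set Y₁ := Finset.univ.filter fun v : V => Sum.inl v ∈ Y with hY₁
  set X₂ := Finset.univ.filter fun i : Fin d => Sum.inr i ∈ X with hX₂
  set Y₂ := Finset.univ.filter fun i : Fin d => Sum.inr i ∈ Y with hY₂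
  set F := (cliqueSum G d).edgeFinset.filter fun e => ∃ u ∈ X, ∃ w ∈ Y, e = s(u, w) with hF
  set P := fun e : Sym2 (V ⊕ Fin d) => ∃ u v : V, e = s(Sum.inl u, Sum.inl v) with hP
  have hsplitF : (F.filter P).card + (F.filter fun e => ¬ P e).card = F.card :=
    Finset.card_filter_add_card_filter_not _
  have hA : (F.filter P).card ≤ edgesBetween G X₁ Y₁ := cliqueSum_inl_part_between G v₀ X Y
  have hBprep : ∀ e ∈ F.filter (fun e => ¬ P e),
      ¬ e.IsDiag ∧ ∀ x ∈ e, x ∈ (X₂ ∪ Y₂).image Sum.inr := by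
    intro e he
    induction e using Sym2.ind with
    | _ a b =>
      simp only [hF, hP, Finset.mem_filter, SimpleGraph.mem_edgeFinset,
        SimpleGraph.mem_edgeSet] at he
      obtain ⟨⟨heE, u, hu, w, hw, heq⟩, hnP⟩ := he
      refine ⟨SimpleGraph.not_isDiag_of_mem_edgeSet _ (((cliqueSum G d).mem_edgeSet).mpr heE), ?_⟩
      rcases a with a | i
      · rcases b with b | j
        · exact absurd ⟨a, b, rfl⟩ hnP
        · exact absurd heE (cliqueSum_adj_inl_inr G d a j)
      · rcases b with b | j
        · exact absurd heE (cliqueSum_adj_inr_inl G d i b)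
        · rw [Sym2.eq_iff] at heq
          have hi : i ∈ X₂ ∪ Y₂ ∧ j ∈ X₂ ∪ Y₂ := by
            rcases heq with ⟨rfl, rfl⟩ | ⟨rfl, rfl⟩
            · exact ⟨Finset.mem_union_left _ (Finset.mem_filter.mpr ⟨Finset.mem_univ _, hu⟩),
                Finset.mem_union_right _ (Finset.mem_filter.mpr ⟨Finset.mem_univ _, hw⟩)⟩
            · exact ⟨Finset.mem_union_right _ (Finset.mem_filter.mpr ⟨Finset.mem_univ _, hw⟩),
                Finset.mem_union_left _ (Finset.mem_filter.mpr ⟨Finset.mem_univ _, hu⟩)⟩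
          intro x hx
          rw [Sym2.mem_iff] at hx
          rcases hx with rfl | rfl
          · exact Finset.mem_image_of_mem _ hi.1
          · exact Finset.mem_image_of_mem _ hi.2
  have hB : (F.filter fun e => ¬ P e).card + (X₂ ∪ Y₂).card
      ≤ Nat.choose ((X₂ ∪ Y₂).card + 1) 2 := by
    have := sym2_bound (F.filter fun e => ¬ P e) ((X₂ ∪ Y₂).image Sum.inr)
      (fun e he => (hBprep e he).1) (fun e he => (hBprep e he).2)
    rwa [Finset.card_image_of_injective _ Sum.inr_injective] at this
  have hXs : X₁.card + X₂.card = X.card := split_card X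
  have hYs : Y₁.card + Y₂.card = Y.card := split_card Y
  have ht5 : (X₂ ∪ Y₂).card ≤ 5 := by
    have : (X₂ ∪ Y₂).card ≤ d := by simpa using Finset.card_le_univ (X₂ ∪ Y₂)
    omega
  have htq : (X₂ ∪ Y₂).card ≤ X₂.card + Y₂.card := Finset.card_union_le _ _
  have hdisj1 : Disjoint X₁ Y₁ := by
    rw [Finset.disjoint_left]
    intro v hv hv'
    exact (Finset.disjoint_left.mp hXY) (Finset.mem_filter.mp hv).2 (Finset.mem_filter.mp hv').2
  have hA3 : edgesBetween G X₁ Y₁ ≤ 2 * (X₁.card + Y₁.card) := hG X₁ Y₁ hdisj1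
  have hch : Nat.choose ((X₂ ∪ Y₂).card + 1) 2 ≤ 3 * (X₂ ∪ Y₂).card := by
    rw [Nat.choose_two_right]
    set t := (X₂ ∪ Y₂).card
    have h3 : (t + 1) * (t + 1 - 1) ≤ 6 * t := by
      have h4 : t + 1 - 1 = t := by omega
      rw [h4]
      exact Nat.mul_le_mul_right _ (by omega)
    calc (t + 1) * (t + 1 - 1) / 2 ≤ 6 * t / 2 := Nat.div_le_div_right h3
      _ = 3 * t := by omega
  have hBB : (F.filter fun e => ¬ P e).card ≤ 2 * (X₂.card + Y₂.card) := by omega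
  calc edgesBetween (cliqueSum G d) X Y = F.card := by
        rw [hF]; unfold edgesBetween; congr 1; apply Finset.filter_congr_decidable
    _ = (F.filter P).card + (F.filter fun e => ¬ P e).card := hsplitF.symm
    _ ≤ 2 * (X₁.card + Y₁.card) + 2 * (X₂.card + Y₂.card) := Nat.add_le_add (hA.trans hA3) hBB
    _ ≤ 2 * (X.card + Y.card) := by omega

lemma cliqueSum_degree_le [Fintype V] (G : SimpleGraph V) {d r : ℕ} (hd : d ≤ 5) (hr : 9 ≤ r)
    (hΔ : ∀ v : V, G.degree v ≤ r) : ∀ x : V ⊕ Fin d, (cliqueSum G d).degree x ≤ r := by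
  classical
  intro x
  rcases x with u | i
  · have : (cliqueSum G d).degree (Sum.inl u) ≤ G.degree u := by
      rw [← SimpleGraph.card_neighborFinset_eq_degree, ← SimpleGraph.card_neighborFinset_eq_degree]
      apply Finset.card_le_card_of_injOn (Sum.elim id fun _ => u)
      · intro y hy
        rw [Finset.mem_coe, SimpleGraph.mem_neighborFinset] at hy
        rcases y with w | j
        · rw [Finset.mem_coe, SimpleGraph.mem_neighborFinset]; exact hy
        · exact absurd hy (cliqueSum_adj_inl_inr G d u j)
      · intro y hy y' hy' hyy
        simp only [Finset.coe_sort_coe, SimpleGraph.mem_neighborFinset, Finset.mem_coe] at hy hy'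
        rcases y with w | j
        · rcases y' with w' | j'
          · simpa using hyy
          · exact absurd hy' (cliqueSum_adj_inl_inr G d u j')
        · exact absurd hy (cliqueSum_adj_inl_inr G d u j)
    exact this.trans (hΔ u)
  · have : (cliqueSum G d).degree (Sum.inr i) ≤ d := by
      rw [← SimpleGraph.card_neighborFinset_eq_degree]
      have h2 : ((cliqueSum G d).neighborFinset (Sum.inr i)).card
          ≤ (Finset.univ : Finset (Fin d)).card :=
        Finset.card_le_card_of_injOn (Sum.elim (fun _ => i) id)
          (fun y _ => Finset.mem_univ _)
          (by
            intro y hy y' hy' hyy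
            simp only [Finset.coe_sort_coe, SimpleGraph.mem_neighborFinset,
              Finset.mem_coe] at hy hy'
            rcases y with w | j
            · exact absurd hy (cliqueSum_adj_inr_inl G d i w)
            · rcases y' with w' | j'
              · exact absurd hy' (cliqueSum_adj_inr_inl G d i w')
              · simpa using hyy)
      simpa using h2
    omega

lemma clique_case (r : ℕ) (hr : 9 ≤ r)
    (hdiv : ∀ (W : Type) [Fintype W] (H : SimpleGraph W),
      SemiPlanarBounds H → (∀ w : W, H.degree w ≤ r) → r ∣ Fintype.card W →
      ∃ c : W → Fin r, IsEquitableColoring H r c)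
    (V : Type) [Fintype V] (G : SimpleGraph V)
    (hG : SemiPlanarBounds G) (hΔ : ∀ v : V, G.degree v ≤ r)
    (d : ℕ) (hd1 : 1 ≤ d) (hd5 : d ≤ 5) (hmod : r ∣ (Fintype.card V + d)) (v₀ : V) :
    ∃ c : V → Fin r, IsEquitableColoring G r c := by
  classical
  set H := cliqueSum G d with hH
  have hHb : SemiPlanarBounds H :=
    ⟨cliqueSum_edgesWithin G hd5 v₀ hG.1, cliqueSum_edgesBetween G hd5 v₀ hG.2⟩
  have hHΔ : ∀ x : V ⊕ Fin d, H.degree x ≤ r := cliqueSum_degree_le G hd5 hr hΔ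
  have hcard : Fintype.card (V ⊕ Fin d) = Fintype.card V + d := by
    simp [Fintype.card_sum]
  have hdvd : r ∣ Fintype.card (V ⊕ Fin d) := by rw [hcard]; exact hmod
  obtain ⟨c, hcprop, hceq⟩ := hdiv (V ⊕ Fin d) H hHb hHΔ hdvd
  set cV : V → Fin r := fun v => c (Sum.inl v) with hcV
  have hr0 : r ≠ 0 := by omega
  have hM := equitable_dvd_fibers hr0 c hceq hdvd
  set M := Fintype.card (V ⊕ Fin d) / r with hMdef
  -- fibers split
  have hsplit : ∀ i : Fin r,
      (Finset.univ.filter fun v : V => cV v = i).card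
        + (Finset.univ.filter fun p : Fin d => c (Sum.inr p) = i).card = M := by
    intro i
    have h1 := split_card (Finset.univ.filter fun x : V ⊕ Fin d => c x = i)
    have h2 : (Finset.univ.filter fun v : V =>
        Sum.inl v ∈ Finset.univ.filter fun x : V ⊕ Fin d => c x = i)
        = Finset.univ.filter fun v : V => cV v = i := by
      apply Finset.filter_congr
      intro v _
      simp [hcV]
    have h3 : (Finset.univ.filter fun p : Fin d =>
        Sum.inr p ∈ Finset.univ.filter fun x : V ⊕ Fin d => c x = i)
        = Finset.univ.filter fun p : Fin d => c (Sum.inr p) = i := by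
      apply Finset.filter_congr
      intro p _
      simp
    rw [h2, h3] at h1
    rw [h1, hM i]
  have hinr : ∀ i : Fin r, (Finset.univ.filter fun p : Fin d => c (Sum.inr p) = i).card ≤ 1 := by
    intro i
    rw [Finset.card_le_one]
    intro a ha b hb
    by_contra hab
    have hadj : H.Adj (Sum.inr a) (Sum.inr b) := hab
    exact hcprop _ _ hadj (by
      rw [(Finset.mem_filter.mp ha).2, (Finset.mem_filter.mp hb).2])
  refine ⟨cV, ?_, ?_⟩
  · intro u w hadj
    exact hcprop _ _ (by exact hadj : H.Adj (Sum.inl u) (Sum.inl w))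
  · intro i j
    have h1 := hsplit i
    have h2 := hsplit j
    have h3 := hinr i
    have h4 := hinr j
    omega


lemma main_ind (r : ℕ) (hr : 9 ≤ r)
    (hdiv : ∀ (W : Type) [Fintype W] (H : SimpleGraph W),
      SemiPlanarBounds H → (∀ w : W, H.degree w ≤ r) → r ∣ Fintype.card W →
      ∃ c : W → Fin r, IsEquitableColoring H r c) :
    ∀ t : ℕ, t + 6 ≤ r → ∀ (V : Type) [Fintype V] (G : SimpleGraph V),
      SemiPlanarBounds G → (∀ v : V, G.degree v ≤ r) → Fintype.card V % r = t →
      ∃ c : V → Fin r, (∀ u v : V, G.Adj u v → c u ≠ c v) ∧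
        ∀ i : Fin r, (Finset.univ.filter fun v => c v = i).card = Fintype.card V / r ∨
          (Finset.univ.filter fun v => c v = i).card = Fintype.card V / r + 1 := by
  intro t
  induction t with
  | zero =>
    intro _ V _ G hG hΔ hmod
    have hdvd : r ∣ Fintype.card V := Nat.dvd_of_mod_eq_zero hmod
    obtain ⟨c, hc1, hc2⟩ := hdiv V G hG hΔ hdvd
    exact ⟨c, hc1, fun i => Or.inl (equitable_dvd_fibers (by omega) c hc2 hdvd i)⟩
  | succ t IH =>
    intro hle V _ G hG hΔ hmod
    classical
    have hr0 : 0 < r := by omega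
    have hpos : 0 < Fintype.card V := by
      rcases Nat.eq_zero_or_pos (Fintype.card V) with h | h
      · rw [h, Nat.zero_mod] at hmod; omega
      · exact h
    have hne : Nonempty V := Fintype.card_pos_iff.mp hpos
    obtain ⟨v, hv6⟩ := exists_low_degree G hG.1 hne
    -- the subgraph on V' = V \ {v}
    set V' := {w : V // w ≠ v} with hV'
    set G' : SimpleGraph V' := G.comap Subtype.val with hG'
    have hcard' : Fintype.card V' = Fintype.card V - 1 := by
      have h1 : Fintype.card {w : V // ¬ w = v} = Fintype.card V - Fintype.card {w : V // w = v} :=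
        Fintype.card_subtype_compl (fun w : V => w = v)
      rw [Fintype.card_subtype_eq] at h1
      exact h1
    -- arithmetic
    have htlt : t + 1 < r := by omega
    set q := Fintype.card V / r with hq
    have hn : Fintype.card V = r * q + (t + 1) := by
      have hdm := Nat.div_add_mod (Fintype.card V) r
      rw [← hq] at hdm
      omega
    have hn' : Fintype.card V' = r * q + t := by omega
    have hmod' : Fintype.card V' % r = t := by
      rw [hn', Nat.mul_add_mod, Nat.mod_eq_of_lt (by omega)]
    have hdiv' : Fintype.card V' / r = q := by
      rw [hn', Nat.mul_add_div hr0, Nat.div_eq_of_lt (by omega), Nat.add_zero]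
    -- bounds for G'
    have hG'b : SemiPlanarBounds G' := by
      constructor
      · intro S
        have h1 := comap_edgesWithin_le G Subtype.val Subtype.val_injective S
        rw [← hG'] at h1
        have h2 := hG.1 (S.image Subtype.val)
        rw [Finset.card_image_of_injective _ Subtype.val_injective] at h2
        omega
      · intro X Y hXY
        have h1 := comap_edgesBetween_le G Subtype.val Subtype.val_injective X Y
        have h2 := hG.2 (X.image Subtype.val) (Y.image Subtype.val) (by
          rw [Finset.disjoint_left]
          intro x hx hy
          obtain ⟨a, ha, rfl⟩ := Finset.mem_image.mp hx
          obtain ⟨b, hb, hba⟩ := Finset.mem_image.mp hy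
          have : b = a := Subtype.val_injective hba
          subst this
          exact (Finset.disjoint_left.mp hXY) ha hb)
        rw [Finset.card_image_of_injective _ Subtype.val_injective,
          Finset.card_image_of_injective _ Subtype.val_injective] at h2
        rw [← hG'] at h1
        omega
    have hG'Δ : ∀ w : V', G'.degree w ≤ r := fun w =>
      (comap_degree_le G Subtype.val Subtype.val_injective w).trans (hΔ w.val)
    obtain ⟨c', hc'p, hc'd⟩ := IH (by omega) V' G' hG'b hG'Δ hmod'
    rw [hdiv'] at hc'd
    -- count classes of size q
    set f : Fin r → ℕ := fun i => (Finset.univ.filter fun w => c' w = i).card with hf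
    have hsumf : ∑ i : Fin r, f i = r * q + t := by rw [hf, fiber_sum c', hn']
    have hbig : (Finset.univ.filter fun i : Fin r => f i = q + 1).card = t :=
      count_big f q t (by omega) hsumf (fun i => hc'd i)
    have hsmallbig : (Finset.univ.filter fun i : Fin r => ¬ f i = q + 1)
        = (Finset.univ.filter fun i : Fin r => f i = q) := by
      apply Finset.filter_congr
      intro i _
      rcases hc'd i with h | h <;> simp [hf] at h ⊢ <;> omega
    have hsmall : (Finset.univ.filter fun i : Fin r => f i = q).card = r - t := by
      have := Finset.card_filter_add_card_filter_not
        (s := (Finset.univ : Finset (Fin r))) (p := fun i => f i = q + 1)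
      rw [hsmallbig] at this
      rw [Finset.card_univ, Fintype.card_fin] at this
      omega
    -- bad colors: colors of neighbors of v
    set bad : Finset (Fin r) := (Finset.univ.filter fun w : V' => G.Adj v w.val).image c'
      with hbad
    have hbadcard : bad.card ≤ 6 := by
      have h1 : bad.card ≤ (Finset.univ.filter fun w : V' => G.Adj v w.val).card :=
        Finset.card_image_le
      have h2 : (Finset.univ.filter fun w : V' => G.Adj v w.val).card ≤ G.degree v := by
        rw [← SimpleGraph.card_neighborFinset_eq_degree]
        apply Finset.card_le_card_of_injOn Subtype.val
        · intro w hw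
          rw [Finset.mem_coe, SimpleGraph.mem_neighborFinset]
          exact (Finset.mem_filter.mp hw).2
        · exact Subtype.val_injective.injOn
      omega
    -- choose a good color
    have hgood : ((Finset.univ.filter fun i : Fin r => f i = q) \ bad).Nonempty := by
      rw [← Finset.card_pos]
      have := Finset.le_card_sdiff bad (Finset.univ.filter fun i : Fin r => f i = q)
      omega
    obtain ⟨j, hj⟩ := hgood
    have hjsmall : f j = q := (Finset.mem_filter.mp (Finset.mem_sdiff.mp hj).1).2
    have hjbad : j ∉ bad := (Finset.mem_sdiff.mp hj).2
    -- extend the coloring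
    set c : V → Fin r := fun w => if h : w = v then j else c' ⟨w, h⟩ with hc
    have hcv : c v = j := by rw [hc]; simp
    have hcw : ∀ (w : V) (h : w ≠ v), c w = c' ⟨w, h⟩ := by
      intro w h; rw [hc]; simp [h]
    have hnotbad : ∀ (w : V) (h : w ≠ v), G.Adj v w → c' ⟨w, h⟩ ≠ j := by
      intro w h hadj heq
      apply hjbad
      rw [hbad]
      exact Finset.mem_image.mpr ⟨⟨w, h⟩, Finset.mem_filter.mpr ⟨Finset.mem_univ _, hadj⟩, heq⟩
    refine ⟨c, ?_, ?_⟩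
    · intro x y hadj
      by_cases hx : x = v
      · have hadj' : G.Adj v y := by rw [← hx]; exact hadj
        have hy : y ≠ v := by
          intro h
          rw [h] at hadj'
          exact G.irrefl hadj'
        rw [hx, hcv, hcw y hy]
        exact fun h => hnotbad y hy hadj' h.symm
      · by_cases hy : y = v
        · have hadj' : G.Adj v x := by rw [← hy]; exact G.adj_symm hadj
          rw [hy, hcv, hcw x hx]
          exact hnotbad x hx hadj'
        · rw [hcw x hx, hcw y hy]
          exact hc'p ⟨x, hx⟩ ⟨y, hy⟩ hadj
    · -- fibers
      have hfib : ∀ i : Fin r, (Finset.univ.filter fun w : V => c w = i).card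
          = f i + (if i = j then 1 else 0) := by
        intro i
        have hseteq : (Finset.univ.filter fun w : V => c w = i)
            = ((Finset.univ.filter fun w : V' => c' w = i).map
                ⟨Subtype.val, Subtype.val_injective⟩)
              ∪ (if i = j then {v} else ∅) := by
          ext w
          by_cases hw : w = v
          · subst hw
            simp only [Finset.mem_filter, Finset.mem_univ, true_and, Finset.mem_union,
              Finset.mem_map, Function.Embedding.coeFn_mk]
            constructor
            · intro h
              rw [hcv] at h
              subst h
              simp
            · intro h
              rcases h with ⟨⟨a, ha⟩, -, hav⟩ | h
              · exact absurd hav ha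
              · by_cases hij : i = j
                · rw [hcv, hij]
                · simp [hij] at h
          · simp only [Finset.mem_filter, Finset.mem_univ, true_and, Finset.mem_union,
              Finset.mem_map, Function.Embedding.coeFn_mk]
            rw [hcw w hw]
            constructor
            · intro h
              exact Or.inl ⟨⟨w, hw⟩, by simpa using h, rfl⟩
            · intro h
              rcases h with ⟨⟨a, ha⟩, hmem, hav⟩ | h
              · cases hav
                simpa using hmem
              · by_cases hij : i = j <;> simp [hij] at h
                exact absurd h hw
          -- done hsetiq
        rw [hseteq, Finset.card_union_of_disjoint, Finset.card_map]
        · rw [hf]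
          congr 1
          by_cases hij : i = j <;> simp [hij]
        · rw [Finset.disjoint_left]
          intro x hx hx2
          obtain ⟨⟨a, ha⟩, -, rfl⟩ := Finset.mem_map.mp hx
          by_cases hij : i = j <;> simp [hij] at hx2
          exact ha hx2
      intro i
      rw [hfib i, hq]
      by_cases hij : i = j
      · subst hij
        rw [hjsmall]
        simp [hq]
      · simp only [hij, if_false, Nat.add_zero]
        rcases hc'd i with h | h
        · exact Or.inl h
        · exact Or.inr h


end Aux

/-- **Lemma 2.2 (semi-planar case).** If every graph satisfying the semi-planar edge
bounds with maximum degree at most `r ≥ 9` and with number of vertices divisible by `r`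
has an equitable `r`-coloring, then so does every graph satisfying the semi-planar edge
bounds with maximum degree at most `r`. -/
theorem semiPlanar_divisible_reduction (r : ℕ) (hr : 9 ≤ r)
    (hdiv : ∀ (W : Type) [Fintype W] (H : SimpleGraph W),
      SemiPlanarBounds H → (∀ w : W, H.degree w ≤ r) → r ∣ Fintype.card W →
      ∃ c : W → Fin r, IsEquitableColoring H r c)
    (V : Type) [Fintype V] (G : SimpleGraph V)
    (hG : SemiPlanarBounds G) (hΔ : ∀ v : V, G.degree v ≤ r) :
    ∃ c : V → Fin r, IsEquitableColoring G r c := by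
  classical
  have hr0 : 0 < r := by omega
  by_cases hs : Fintype.card V % r + 6 ≤ r
  · obtain ⟨c, hp, hd⟩ := main_ind r hr hdiv (Fintype.card V % r) hs V G hG hΔ rfl
    refine ⟨c, hp, ?_⟩
    intro i j
    rcases hd i with h | h <;> rcases hd j with h' | h' <;> omega
  · push_neg at hs
    have hslt : Fintype.card V % r < r := Nat.mod_lt _ hr0
    have hd1 : 1 ≤ r - Fintype.card V % r := by omega
    have hd5 : r - Fintype.card V % r ≤ 5 := by omega
    have hdm := Nat.div_add_mod (Fintype.card V) r
    have hmod : r ∣ (Fintype.card V + (r - Fintype.card V % r)) := by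
      refine ⟨Fintype.card V / r + 1, ?_⟩
      have h2 : r * (Fintype.card V / r + 1) = r * (Fintype.card V / r) + r := by ring
      omega
    have hnposV : 0 < Fintype.card V := by
      by_contra h
      push_neg at h
      have h0 : Fintype.card V = 0 := by omega
      rw [h0, Nat.zero_mod] at hs
      omega
    have hv₀ : Nonempty V := Fintype.card_pos_iff.mp hnposV
    exact clique_case r hr hdiv V G hG hΔ _ hd1 hd5 hmod hv₀.some

end Equitable
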